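/- Let z_1,…,z_n be distinct complex numbers and m_1,…,m_n positive integers. Let f,g ∈ ℂ[x] be monic polynomials of degrees l̃ and l respectively with l̃ > l ≥ 0, such that for each s at least one of f(z_s), g(z_s) is nonzero and f'g − fg' = (l̃ − l)·∏_{s=1}^n (x−z_s)^{m_s}. Then there exists a unique h ∈ ℂ^n such that T_h(f) = 0 and T_h(g) = 0; moreover this h satisfies ∑_s h_s = 0 and ∑_s z_s h_s = l·l̃. -/

import Mathlib

noncomputable section

/-- The polynomial form `T_h` of the differential operator
`d²/dx² − ∑_s m_s/(x−z_s)·d/dx + ∑_s h_s/(x−z_s)`. -/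
def Tpoly {n : ℕ} (z m h : Fin n → ℂ) (p : Polynomial ℂ) : Polynomial ℂ :=
  (∏ s, (Polynomial.X - Polynomial.C (z s))) *
      Polynomial.derivative (Polynomial.derivative p)
    - (∑ s, Polynomial.C (m s) *
        ∏ r ∈ Finset.univ.erase s, (Polynomial.X - Polynomial.C (z r))) *
      Polynomial.derivative p
    + (∑ s, Polynomial.C (h s) *
        ∏ r ∈ Finset.univ.erase s, (Polynomial.X - Polynomial.C (z r))) * p

/-- The pair (m; l) is separating. -/
def Separating {n : ℕ} (m : Fin n → ℂ) (l : ℕ) : Prop :=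
  ∀ i : ℕ, 1 ≤ i → i ≤ l → (∑ s, m s) - 2 * l + 1 + i ≠ 0

end

open Polynomial in
private lemma derivative_finset_prod' {ι : Type*} [DecidableEq ι] (s : Finset ι)
    (f : ι → Polynomial ℂ) :
    derivative (∏ i ∈ s, f i) = ∑ i ∈ s, (∏ j ∈ s.erase i, f j) * derivative (f i) := by
  classical
  induction s using Finset.induction_on with
  | empty => simp
  | insert a s hx ih =>
    rw [Finset.prod_insert hx, derivative_mul, Finset.sum_insert hx, ih, Finset.mul_sum]
    rw [Finset.erase_insert hx]
    congr 1
    · ring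
    · refine Finset.sum_congr rfl fun j hj => ?_
      rw [Finset.erase_insert_of_ne (by rintro rfl; exact hx hj),
        Finset.prod_insert (fun h => hx (Finset.mem_of_mem_erase h))]
      ring

theorem statement_16 {n : ℕ} (hn : 1 ≤ n) (z : Fin n → ℂ) (hz : Function.Injective z)
    (m : Fin n → ℕ) (hm : ∀ s, 0 < m s) (lt l : ℕ) (hll : l < lt)
    (f g : Polynomial ℂ) (hf : f.Monic) (hg : g.Monic)
    (hdf : f.natDegree = lt) (hdg : g.natDegree = l)
    (hnv : ∀ s, f.eval (z s) ≠ 0 ∨ g.eval (z s) ≠ 0)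
    (hWr : Polynomial.derivative f * g - f * Polynomial.derivative g =
      Polynomial.C ((lt : ℂ) - l) * ∏ s, (Polynomial.X - Polynomial.C (z s)) ^ m s) :
    (∃! h : Fin n → ℂ,
      Tpoly z (fun s => (m s : ℂ)) h f = 0 ∧ Tpoly z (fun s => (m s : ℂ)) h g = 0) ∧
    (∀ h : Fin n → ℂ,
      Tpoly z (fun s => (m s : ℂ)) h f = 0 → Tpoly z (fun s => (m s : ℂ)) h g = 0 →
      (∑ s, h s = 0) ∧ ∑ s, z s * h s = (l : ℂ) * (lt : ℂ)) := by
  classical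
  open Polynomial Finset in
  have hlt1 : 1 ≤ lt := by omega
  have hfne : f ≠ 0 := hf.ne_zero
  have hgne : g ≠ 0 := hg.ne_zero
  have hc : ((lt : ℂ) - l) ≠ 0 := sub_ne_zero.mpr (by exact_mod_cast hll.ne')
  set Ps : Fin n → Polynomial ℂ :=
    fun s => ∏ r ∈ Finset.univ.erase s, (X - C (z r)) with hPsdef
  set P : Polynomial ℂ := ∏ s, (X - C (z s)) with hPdef
  set W : Polynomial ℂ := ∏ s, (X - C (z s)) ^ m s with hWdef
  set B : (Fin n → ℂ) → Polynomial ℂ := fun e => ∑ s, C (e s) * Ps s with hBdef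
  set A : Polynomial ℂ := B (fun s => (m s : ℂ)) with hAdef
  -- basic facts about the auxiliary polynomials
  have hPs_monic : ∀ s, (Ps s).Monic :=
    fun s => monic_prod_of_monic _ _ fun r _ => monic_X_sub_C _
  have hPs_deg : ∀ s, (Ps s).natDegree = n - 1 := by
    intro s
    rw [hPsdef, natDegree_prod _ _ fun r _ => X_sub_C_ne_zero (z r)]
    simp [natDegree_X_sub_C, Finset.card_erase_of_mem]
  have hP_monic : P.Monic := monic_prod_of_monic _ _ fun r _ => monic_X_sub_C _
  have hP_deg : P.natDegree = n := by
    rw [hPdef, natDegree_prod _ _ fun r _ => X_sub_C_ne_zero (z r)]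
    simp [natDegree_X_sub_C]
  have hW_monic : W.Monic :=
    monic_prod_of_monic _ _ fun r _ => (monic_X_sub_C _).pow _
  have hW_deg : W.natDegree = ∑ s, m s := by
    rw [hWdef, natDegree_prod _ _ fun r _ => pow_ne_zero _ (X_sub_C_ne_zero (z r))]
    simp [natDegree_pow, natDegree_X_sub_C]
  -- reformulation of the equation `Tpoly = 0`
  have hT : ∀ (e : Fin n → ℂ) (p : Polynomial ℂ),
      Tpoly z (fun s => (m s : ℂ)) e p = 0 ↔
      B e * p = A * derivative p - P * derivative (derivative p) := by
    intro e p
    simp only [Tpoly, hAdef, hBdef, hPsdef, hPdef]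
    constructor <;> intro hh <;> linear_combination hh
  -- evaluation facts
  have hPse : ∀ s, (Ps s).eval (z s) ≠ 0 := by
    intro s
    rw [hPsdef]
    simp only [eval_prod, eval_sub, eval_X, eval_C]
    exact Finset.prod_ne_zero_iff.mpr fun r hr =>
      sub_ne_zero.mpr fun h => (Finset.ne_of_mem_erase hr) (hz h.symm)
  have hPs_eval_ne : ∀ s t, t ≠ s → (Ps s).eval (z t) = 0 := by
    intro s t hts
    rw [hPsdef]
    simp only [eval_prod, eval_sub, eval_X, eval_C]
    exact Finset.prod_eq_zero (Finset.mem_erase.mpr ⟨hts, Finset.mem_univ t⟩) (sub_self _)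
  have hBeval : ∀ (e : Fin n → ℂ) t, (B e).eval (z t) = e t * (Ps t).eval (z t) := by
    intro e t
    rw [hBdef]
    simp only [eval_finset_sum, eval_mul, eval_C]
    exact Finset.sum_eq_single t
      (fun s _ hst => by rw [hPs_eval_ne s t (Ne.symm hst), mul_zero])
      (fun h => absurd (Finset.mem_univ t) h)
  have hBdeg : ∀ e, (B e).natDegree < n := by
    intro e
    have : (B e).natDegree ≤ n - 1 := by
      rw [hBdef]
      refine natDegree_sum_le_of_forall_le _ _ fun s _ => ?_
      exact le_trans (natDegree_C_mul_le _ _) (le_of_eq (hPs_deg s))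
    omega
  have hBc1 : ∀ e, (B e).coeff (n - 1) = ∑ s, e s := by
    intro e
    rw [hBdef]
    simp only [finset_sum_coeff, coeff_C_mul]
    refine Finset.sum_congr rfl fun s _ => ?_
    rw [← hPs_deg s, Monic.coeff_natDegree (hPs_monic s), mul_one]
  have hzero : ∀ q : Polynomial ℂ, q.natDegree < n → (∀ t, q.eval (z t) = 0) → q = 0 := by
    intro q hq hq'
    exact Polynomial.eq_zero_of_natDegree_lt_card_of_eval_eq_zero q hz hq'
      (by simpa using hq)
  have hBinj : ∀ e e', B e = B e' → e = e' := by
    intro e e' hee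
    funext t
    have h1 := congrArg (eval (z t)) hee
    rw [hBeval, hBeval] at h1
    exact mul_right_cancel₀ (hPse t) h1
  -- Wronskian manipulations
  have hw' : derivative (derivative f) * g - f * derivative (derivative g) =
      C ((lt : ℂ) - l) * derivative W := by
    have h2 := congrArg derivative hWr
    rw [derivative_sub, derivative_mul, derivative_mul, derivative_mul, derivative_C] at h2
    linear_combination h2
  have hPW : P * derivative W = A * W := by
    rw [hWdef, derivative_finset_prod']
    rw [Finset.mul_sum, hAdef, hBdef, Finset.sum_mul]
    refine Finset.sum_congr rfl fun s _ => ?_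
    rw [derivative_X_sub_C_pow]
    have hms : (X - C (z s)) * (X - C (z s)) ^ (m s - 1) = (X - C (z s)) ^ (m s) := by
      rw [← pow_succ']
      congr 1
      have := hm s
      omega
    calc P * ((∏ j ∈ Finset.univ.erase s, (X - C (z j)) ^ m j) *
          (C ((m s : ℂ)) * (X - C (z s)) ^ (m s - 1)))
        = C ((m s : ℂ)) * Ps s * (((X - C (z s)) * (X - C (z s)) ^ (m s - 1)) *
            ∏ j ∈ Finset.univ.erase s, (X - C (z j)) ^ m j) := by
          rw [hPdef, hPsdef, ← Finset.prod_erase_mul _ _ (Finset.mem_univ s)]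
          ring
      _ = C ((m s : ℂ)) * Ps s * W := by
          rw [hms, hWdef, ← Finset.mul_prod_erase _ _ (Finset.mem_univ s)]
  have hFG : (A * derivative f - P * derivative (derivative f)) * g =
      (A * derivative g - P * derivative (derivative g)) * f := by
    linear_combination A * hWr - P * hw' - C ((lt : ℂ) - l) * hPW
  -- coprimality
  have hcop : IsCoprime f g := by
    refine isCoprime_of_irreducible_dvd (fun h => hfne h.1) ?_
    intro q hq hqf hqg
    have hdq : q.degree ≠ 0 := fun h => hq.not_isUnit (isUnit_iff_degree_eq_zero.mpr h)
    obtain ⟨w, hw0⟩ := IsAlgClosed.exists_root q hdq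
    have hfw : f.eval w = 0 := by
      obtain ⟨u, rfl⟩ := hqf; rw [eval_mul, hw0.eq_zero, zero_mul]
    have hgw : g.eval w = 0 := by
      obtain ⟨u, rfl⟩ := hqg; rw [eval_mul, hw0.eq_zero, zero_mul]
    have h3 := congrArg (eval w) hWr
    simp only [eval_sub, eval_mul, hfw, hgw, mul_zero, zero_mul, sub_zero, zero_sub,
      eval_C, hWdef, eval_prod, eval_pow, eval_sub, eval_X, neg_eq_zero] at h3
    have h4 : ∏ s, (w - z s) ^ m s = 0 := by
      rcases mul_eq_zero.mp (h3.symm) with h | h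
      · exact absurd h hc
      · exact h
    obtain ⟨s, -, hs⟩ := Finset.prod_eq_zero_iff.mp h4
    have hws : w = z s := by
      exact sub_eq_zero.mp ((pow_eq_zero_iff (hm s).ne').mp hs)
    rcases hnv s with h | h
    · exact h (hws ▸ hfw)
    · exact h (hws ▸ hgw)
  -- divide by f
  have hdvd : f ∣ (A * derivative f - P * derivative (derivative f)) := by
    refine hcop.dvd_of_dvd_mul_right ⟨A * derivative g - P * derivative (derivative g), ?_⟩
    linear_combination hFG
  obtain ⟨H, hH⟩ := hdvd
  have hHg : H * g = A * derivative g - P * derivative (derivative g) := by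
    refine mul_left_cancel₀ hfne ?_
    linear_combination hFG - g * hH
  -- the sum of the m's
  have hsum : ∑ s, m s = lt + l - 1 := by
    have hfc : f.coeff lt = 1 := by rw [← hdf]; exact hf.coeff_natDegree
    have hgc : g.coeff l = 1 := by rw [← hdg]; exact hg.coeff_natDegree
    have hf'nd : (derivative f).natDegree ≤ lt - 1 := by
      have := natDegree_derivative_le f; omega
    have hg'nd : (derivative g).natDegree ≤ l - 1 := by
      have := natDegree_derivative_le g; omega
    have hf'c : (derivative f).coeff (lt - 1) = (lt : ℂ) := by
      rw [coeff_derivative, show lt - 1 + 1 = lt by omega, hfc, one_mul,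
        Nat.cast_sub hlt1]
      push_cast
      ring
    have hDle : (derivative f * g - f * derivative g).natDegree ≤ lt + l - 1 := by
      refine le_trans (natDegree_sub_le _ _) (max_le ?_ ?_)
      · exact le_trans natDegree_mul_le (by omega)
      · by_cases hl0 : l = 0
        · rw [derivative_of_natDegree_zero (by omega), mul_zero, natDegree_zero]
          omega
        · exact le_trans natDegree_mul_le (by omega)
    have hcoeffD : (derivative f * g - f * derivative g).coeff (lt + l - 1) =
        (lt : ℂ) - l := by
      rw [coeff_sub]
      have c1 : (derivative f * g).coeff (lt + l - 1) = (lt : ℂ) := by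
        rw [show lt + l - 1 = (lt - 1) + l by omega,
          coeff_mul_add_eq_of_natDegree_le hf'nd (le_of_eq hdg), hf'c, hgc, mul_one]
      have c2 : (f * derivative g).coeff (lt + l - 1) = (l : ℂ) := by
        by_cases hl0 : l = 0
        · rw [derivative_of_natDegree_zero (by omega), mul_zero, coeff_zero, hl0,
            Nat.cast_zero]
        · have hl1 : 1 ≤ l := by omega
          rw [show lt + l - 1 = lt + (l - 1) by omega,
            coeff_mul_add_eq_of_natDegree_le (le_of_eq hdf) hg'nd, hfc, one_mul,
            coeff_derivative, show l - 1 + 1 = l by omega, hgc, one_mul,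
            Nat.cast_sub hl1]
          push_cast
          ring
      rw [c1, c2]
    have hle : ∑ s, m s ≤ lt + l - 1 := by
      have h5 : (C ((lt : ℂ) - l) * W).natDegree ≤ lt + l - 1 := by
        rw [← hWr]; exact hDle
      rw [natDegree_C_mul hc, hW_deg] at h5
      exact h5
    have hge : lt + l - 1 ≤ ∑ s, m s := by
      have h6 : lt + l - 1 ≤ (derivative f * g - f * derivative g).natDegree :=
        le_natDegree_of_ne_zero (by rw [hcoeffD]; exact hc)
      rw [hWr, natDegree_C_mul hc, hW_deg] at h6
      exact h6
    omega
  have hn_le : n ≤ ∑ s, m s := by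
    calc n = ∑ _s : Fin n, 1 := by simp
    _ ≤ ∑ s, m s := Finset.sum_le_sum fun s _ => hm s
  have h2lt : 2 ≤ lt := by omega
  -- top coefficient of F
  have hfc : f.coeff lt = 1 := by rw [← hdf]; exact hf.coeff_natDegree
  have hf'nd : (derivative f).natDegree ≤ lt - 1 := by
    have := natDegree_derivative_le f; omega
  have hf''nd : (derivative (derivative f)).natDegree ≤ lt - 2 := by
    have := natDegree_derivative_le (derivative f); omega
  have hf'c : (derivative f).coeff (lt - 1) = (lt : ℂ) := by
    rw [coeff_derivative, show lt - 1 + 1 = lt by omega, hfc, one_mul, Nat.cast_sub hlt1]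
    push_cast
    ring
  have hf''c : (derivative (derivative f)).coeff (lt - 2) = (lt : ℂ) * ((lt : ℂ) - 1) := by
    rw [coeff_derivative, show lt - 2 + 1 = lt - 1 by omega, hf'c,
      Nat.cast_sub (by omega : 2 ≤ lt)]
    push_cast
    ring
  have hAnd : A.natDegree ≤ n - 1 := by
    rw [hAdef, hBdef]
    refine natDegree_sum_le_of_forall_le _ _ fun s _ => ?_
    exact le_trans (natDegree_C_mul_le _ _) (le_of_eq (hPs_deg s))
  have hAc : A.coeff (n - 1) = ∑ s, (m s : ℂ) := hBc1 _
  have hPc : P.coeff n = 1 := by rw [← hP_deg]; exact hP_monic.coeff_natDegree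
  have hsC : ∑ s, (m s : ℂ) = (lt : ℂ) + l - 1 := by
    have h7 : ((∑ s, m s : ℕ) : ℂ) = ((lt + l - 1 : ℕ) : ℂ) := by rw [hsum]
    rw [Nat.cast_sum] at h7
    rw [h7, Nat.cast_sub (by omega : 1 ≤ lt + l)]
    push_cast
    ring
  have hFtop : (A * derivative f - P * derivative (derivative f)).coeff (n + lt - 2) =
      (l : ℂ) * lt := by
    rw [coeff_sub]
    have c1 : (A * derivative f).coeff (n + lt - 2) = (∑ s, (m s : ℂ)) * lt := by
      rw [show n + lt - 2 = (n - 1) + (lt - 1) by omega,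
        coeff_mul_add_eq_of_natDegree_le hAnd hf'nd, hAc, hf'c]
    have c2 : (P * derivative (derivative f)).coeff (n + lt - 2) =
        (lt : ℂ) * ((lt : ℂ) - 1) := by
      rw [show n + lt - 2 = n + (lt - 2) by omega,
        coeff_mul_add_eq_of_natDegree_le (le_of_eq hP_deg) hf''nd, hPc, hf''c, one_mul]
    rw [c1, c2, hsC]
    ring
  -- degree of H
  have hFnd : (A * derivative f - P * derivative (derivative f)).natDegree ≤ n + lt - 2 := by
    refine le_trans (natDegree_sub_le _ _) (max_le ?_ ?_)
    · exact le_trans natDegree_mul_le (by omega)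
    · refine le_trans natDegree_mul_le (by omega)
  have hHnd : H = 0 ∨ (H.natDegree ≤ n - 2 ∧ 2 ≤ n) := by
    by_cases h0 : H = 0
    · exact Or.inl h0
    · right
      have h8 := hFnd
      rw [hH, natDegree_mul hfne h0, hdf] at h8
      omega
  have hHlt : H.natDegree < n := by
    rcases hHnd with h0 | ⟨h1, h2⟩
    · rw [h0, natDegree_zero]; omega
    · omega
  have hHc1 : H.coeff (n - 1) = 0 := by
    rcases hHnd with h0 | ⟨h1, h2⟩
    · rw [h0, coeff_zero]
    · exact coeff_eq_zero_of_natDegree_lt (by omega)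
  have hHc2 : H.coeff (n - 2) = (l : ℂ) * lt := by
    have h9 := hFtop
    rw [hH] at h9
    rcases hHnd with h0 | ⟨h1, h2⟩
    · rw [h0, mul_zero, coeff_zero] at h9
      rw [h0, coeff_zero]
      exact h9
    · rw [show n + lt - 2 = lt + (n - 2) by omega,
        coeff_mul_add_eq_of_natDegree_le (le_of_eq hdf) h1, hfc, one_mul] at h9
      exact h9
  -- the interpolating coefficients
  set h0 : Fin n → ℂ := fun s => H.eval (z s) / (Ps s).eval (z s) with hh0def
  have hBH : B h0 = H := by
    have h10 : B h0 - H = 0 := by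
      refine hzero _ (lt_of_le_of_lt (natDegree_sub_le _ _) (max_lt (hBdeg h0) hHlt)) ?_
      intro t
      rw [eval_sub, hBeval, hh0def, div_mul_cancel₀ _ (hPse t), sub_self]
    exact sub_eq_zero.mp h10
  -- every solution has B h = H
  have hmain : ∀ h : Fin n → ℂ, Tpoly z (fun s => (m s : ℂ)) h f = 0 → B h = H := by
    intro h hTf
    have h11 := (hT h f).mp hTf
    rw [hH] at h11
    exact mul_right_cancel₀ hfne (by linear_combination h11)
  have hTf0 : Tpoly z (fun s => (m s : ℂ)) h0 f = 0 := by
    rw [hT h0 f, hBH, hH]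
    ring
  have hTg0 : Tpoly z (fun s => (m s : ℂ)) h0 g = 0 := by
    rw [hT h0 g, hBH, hHg]
  -- conclusions about sums for any solution
  have hconc : ∀ h : Fin n → ℂ, B h = H →
      (∑ s, h s = 0) ∧ ∑ s, z s * h s = (l : ℂ) * (lt : ℂ) := by
    intro h hBh
    have hs0 : ∑ s, h s = 0 := by
      rw [← hBc1 h, hBh, hHc1]
    refine ⟨hs0, ?_⟩
    by_cases hn1 : n = 1
    · have hH0 : H = 0 := by
        rcases hHnd with h0 | ⟨h1, h2⟩
        · exact h0
        · omega
      have hhz : h = fun _ => 0 := by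
        refine hBinj _ _ ?_
        rw [hBh, hH0, hBdef]
        simp
      have h12 : (0 : ℂ) = (l : ℂ) * lt := by
        have := hHc2
        rw [hH0, coeff_zero] at this
        exact this
      rw [hhz]
      simpa using h12
    · have hn2 : 2 ≤ n := by omega
      have hPs_c2 : ∀ s, (Ps s).coeff (n - 2) = -∑ r ∈ Finset.univ.erase s, z r := by
        intro s
        have h13 := prod_X_sub_C_nextCoeff (s := Finset.univ.erase s) z
        rw [nextCoeff_of_natDegree_pos (by rw [hPs_deg s]; omega), hPs_deg s,
          show n - 1 - 1 = n - 2 by omega] at h13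
        exact h13
      have hBc2 : (B h).coeff (n - 2) = ∑ s, h s * ((z s) - ∑ r, z r) := by
        rw [hBdef]
        simp only [finset_sum_coeff, coeff_C_mul]
        refine Finset.sum_congr rfl fun s _ => ?_
        rw [hPs_c2 s, Finset.sum_erase_eq_sub (Finset.mem_univ s)]
        ring
      have h14 : ∑ s, h s * ((z s) - ∑ r, z r) = (l : ℂ) * lt := by
        rw [← hBc2, hBh, hHc2]
      calc ∑ s, z s * h s
          = (∑ s, h s * ((z s) - ∑ r, z r)) + (∑ r, z r) * ∑ s, h s := by
            rw [Finset.mul_sum, ← Finset.sum_add_distrib]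
            exact Finset.sum_congr rfl fun s _ => by ring
        _ = (l : ℂ) * lt := by rw [h14, hs0, mul_zero, add_zero]
  constructor
  · refine ⟨h0, ⟨hTf0, hTg0⟩, ?_⟩
    intro h' ⟨h'f, _⟩
    exact hBinj _ _ ((hmain h' h'f).trans hBH.symm)
  · intro h hTf _
    exact hconc h (hmain h hTf)
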